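/- arXiv:1706.05160 — 2 statements merged into one kernel-verified Lean document; each statement's English description precedes it below -/
import Mathlib

section
/- Let f be a holomorphic cusp form of weight r for a finite index subgroup of SL₂(ℤ) with Fourier coefficients a_k, so that |Im z|^{r/2}|f(z)| is bounded on the upper half plane. Then Σ_{k ≤ K} a_k = O(K^{r/2} log K) as K → ∞. -/
open Complex Finset intervalIntegral

set_option maxHeartbeats 1000000


lemma aux_exp_orth (m : ℤ) (hm : m ≠ 0) :
    ∫ x in (0:ℝ)..1, Complex.exp (2*Real.pi*I*m*x) = 0 := by
  have hc : (2*(Real.pi:ℂ)*I*m) ≠ 0 := by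
    simp [Real.pi_ne_zero, Complex.I_ne_zero, hm]
  have := integral_exp_mul_complex (a := 0) (b := 1) hc
  simp only [Complex.ofReal_zero, Complex.ofReal_one, mul_one, mul_zero, Complex.exp_zero] at this
  rw [show (fun x : ℝ => Complex.exp (2*Real.pi*I*m*x)) = fun x : ℝ => Complex.exp ((2*(Real.pi:ℂ)*I*m)*x) by norm_num] at this ⊢
  rw [this]
  have h1 : Complex.exp (2*(Real.pi:ℂ)*I*m) = 1 := by
    rw [show (2*(Real.pi:ℂ)*I*m) = m * (2*Real.pi*I) by ring]
    exact Complex.exp_int_mul_two_pi_mul_I m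
  rw [h1]; simp

lemma aux_extract (f : ℂ → ℂ) (a : ℕ → ℂ)
    (hexp : ∀ z : ℂ, 0 < z.im →
      HasSum (fun k : ℕ => a (k + 1) * Complex.exp (2 * Real.pi * I * (k + 1) * z)) (f z))
    (y : ℝ) (hy : 0 < y) (k : ℕ) (hk : 1 ≤ k) :
    ∫ x in (0:ℝ)..1, f (x + y*I) * Complex.exp (-(2*Real.pi*I*k)*x)
      = a k * Complex.exp (-(2*Real.pi*k*y) : ℝ) := by
  -- coefficient bound from convergence at (y/2)*I
  obtain ⟨M, hM⟩ : ∃ M : ℝ, ∀ n : ℕ, ‖a (n+1)‖ * Real.exp (-(Real.pi*(n+1)*y)) ≤ M := by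
    have h0 := (hexp (((y/2 : ℝ)) * I) (by simp; positivity)).summable
    have h1 := h0.tendsto_atTop_zero
    have h2 : Filter.Tendsto (fun n : ℕ => ‖a (n+1) * Complex.exp (2*Real.pi*I*(n+1)*(((y/2:ℝ))*I))‖) Filter.atTop (nhds 0) := by
      simpa using h1.norm
    obtain ⟨M, hM⟩ := h2.bddAbove_range
    refine ⟨M, fun n => ?_⟩
    have h3 : ‖a (n+1) * Complex.exp (2*Real.pi*I*(n+1)*(((y/2:ℝ))*I))‖
        = ‖a (n+1)‖ * Real.exp (-(Real.pi*(n+1)*y)) := by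
      rw [norm_mul, Complex.norm_exp]
      congr 2
      have : (2*(Real.pi:ℂ)*I*(n+1)*(((y/2:ℝ))*I)) = (-(Real.pi*(n+1)*y) : ℝ) + 0*I := by
        push_cast
        linear_combination (2*(Real.pi:ℂ)*(n+1)*(y/2)) * Complex.I_sq
      rw [this]
      simp
    exact h3 ▸ hM ⟨n, rfl⟩
  set F : ℕ → ℝ → ℂ := fun n x =>
    a (n+1) * Complex.exp (2*Real.pi*I*(n+1)*(x + y*I)) * Complex.exp (-(2*Real.pi*I*k)*x) with hF
  have key : HasSum (fun n => ∫ x in (0:ℝ)..1, F n x)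
      (∫ x in (0:ℝ)..1, f (x + y*I) * Complex.exp (-(2*Real.pi*I*k)*x)) := by
    refine intervalIntegral.hasSum_integral_of_dominated_convergence (F := F)
      (fun (n : ℕ) (_ : ℝ) => M * Real.exp (-(Real.pi*(n+1)*y))) ?_ ?_ ?_ ?_ ?_
    · intro n
      apply Continuous.aestronglyMeasurable
      fun_prop
    · intro n
      filter_upwards with x _
      have : ‖F n x‖ = ‖a (n+1)‖ * Real.exp (-(2*Real.pi*(n+1)*y)) := by
        rw [hF]
        simp only [norm_mul, Complex.norm_exp]
        have e1 : (2*(Real.pi:ℂ)*I*(n+1)*(x + y*I)).re = -(2*Real.pi*(n+1)*y) := by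
          have : (2*(Real.pi:ℂ)*I*(n+1)*(↑x + ↑y*I)) = (-(2*Real.pi*(n+1)*y) : ℝ) + (2*Real.pi*(n+1)*x : ℝ)*I := by
            push_cast
            linear_combination (2*(Real.pi:ℂ)*(n+1)*y) * Complex.I_sq
          rw [this]; simp
        have e2 : ((-(2*(Real.pi:ℂ)*I*k))*x).re = 0 := by
          have : ((-(2*(Real.pi:ℂ)*I*k))*x) = (0:ℝ) + (-(2*Real.pi*k*x) : ℝ)*I := by
            push_cast; ring
          rw [this]; simp
        rw [e1, e2]
        simp [mul_assoc]
      rw [this]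
      calc ‖a (n+1)‖ * Real.exp (-(2*Real.pi*(n+1)*y))
          = (‖a (n+1)‖ * Real.exp (-(Real.pi*(n+1)*y))) * Real.exp (-(Real.pi*(n+1)*y)) := by
            rw [show -(2*Real.pi*((n:ℝ)+1)*y) = -(Real.pi*((n:ℝ)+1)*y) + -(Real.pi*((n:ℝ)+1)*y) by ring, Real.exp_add]
            ring
        _ ≤ M * Real.exp (-(Real.pi*(n+1)*y)) := by
            apply mul_le_mul_of_nonneg_right (hM n) (Real.exp_nonneg _)
    · filter_upwards with x _
      apply Summable.mul_left
      have : (fun n : ℕ => Real.exp (-(Real.pi*(n+1)*y))) = fun n : ℕ => (Real.exp (-(Real.pi*y)))^(n+1) := by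
        funext n
        rw [← Real.exp_nat_mul]
        congr 1
        push_cast
        ring
      rw [this]
      apply Summable.comp_injective (f := fun m : ℕ => (Real.exp (-(Real.pi*y)))^m)
      · exact summable_geometric_of_lt_one (Real.exp_nonneg _) (Real.exp_lt_one_iff.mpr (by nlinarith [Real.pi_pos]))
      · exact fun a b => by omega
    · exact intervalIntegrable_const
    · filter_upwards with x _
      exact (hexp (x + y*I) (by simp [hy])).mul_right _
  have hint : ∀ n : ℕ, (∫ x in (0:ℝ)..1, F n x)
      = if n + 1 = k then a k * Complex.exp (-(2*Real.pi*k*y) : ℝ) else 0 := by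
    intro n
    have hFx : ∀ x : ℝ, F n x = (a (n+1) * Complex.exp (-(2*Real.pi*(n+1)*y) : ℝ))
        * Complex.exp (2*Real.pi*I*((((n:ℤ)+1-k : ℤ)):ℂ)*x) := by
      intro x
      rw [hF]
      simp only [mul_assoc, ← Complex.exp_add]
      congr 2
      push_cast
      linear_combination (2*(Real.pi:ℂ)*(n+1)*y) * Complex.I_sq
    rw [intervalIntegral.integral_congr (g := fun x => (a (n+1) * Complex.exp (-(2*Real.pi*(n+1)*y) : ℝ))
        * Complex.exp (2*Real.pi*I*((((n:ℤ)+1-k : ℤ)):ℂ)*x)) (fun x _ => hFx x)]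
    rw [intervalIntegral.integral_const_mul]
    by_cases h : n + 1 = k
    · have : ((n:ℤ)+1-k : ℤ) = 0 := by omega
      rw [this]
      simp only [Int.cast_zero, mul_zero, zero_mul, Complex.exp_zero, if_pos h]
      simp only [intervalIntegral.integral_const, sub_zero, one_smul, smul_eq_mul, mul_one]
      rw [← h]
      push_cast
      ring_nf
    · rw [aux_exp_orth _ (by omega), if_neg h, mul_zero]
  have final : HasSum (fun n => if n + 1 = k then a k * Complex.exp (-(2*Real.pi*k*y) : ℝ) else 0)
      (a k * Complex.exp (-(2*Real.pi*k*y) : ℝ)) := by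
    have : (fun n : ℕ => if n + 1 = k then a k * Complex.exp (-(2*Real.pi*k*y) : ℝ) else 0)
        = fun n : ℕ => if n = k - 1 then a k * Complex.exp (-(2*Real.pi*k*y) : ℝ) else 0 := by
      funext n
      congr 1
      simp only [eq_iff_iff]
      omega
    rw [this]
    exact hasSum_ite_eq (k-1) _
  have := key.unique (by rw [show (fun n => ∫ x in (0:ℝ)..1, F n x) = _ from funext hint]; exact final)
  exact this

lemma aux_cont (f : ℂ → ℂ) (hhol : DifferentiableOn ℂ f {z : ℂ | 0 < z.im})
    (y : ℝ) (hy : 0 < y) : Continuous fun x : ℝ => f (↑x + ↑y*I) := by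
  have h1 : Continuous fun x : ℝ => (↑x + ↑y*I : ℂ) := by continuity
  rw [← continuousOn_univ]
  apply (hhol.continuousOn.comp h1.continuousOn)
  intro x _
  simp [hy]

lemma aux_main_id (f : ℂ → ℂ) (a : ℕ → ℂ)
    (hhol : DifferentiableOn ℂ f {z : ℂ | 0 < z.im})
    (hexp : ∀ z : ℂ, 0 < z.im →
      HasSum (fun k : ℕ => a (k + 1) * Complex.exp (2 * Real.pi * I * (k + 1) * z)) (f z))
    (y : ℝ) (hy : 0 < y) (K : ℕ) :
    ∑ k ∈ Finset.Icc 1 K, a k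
      = ∫ x in (0:ℝ)..1, f (↑x + ↑y*I) * ∑ k ∈ Finset.Icc 1 K,
          Complex.exp (2*Real.pi*y - 2*Real.pi*I*x) ^ k := by
  have hcf := aux_cont f hhol y hy
  have hek : ∀ k ∈ Finset.Icc 1 K, a k
      = ∫ x in (0:ℝ)..1, f (↑x + ↑y*I) * Complex.exp (2*Real.pi*y - 2*Real.pi*I*x) ^ k := by
    intro k hk
    rw [Finset.mem_Icc] at hk
    have E := aux_extract f a hexp y hy k hk.1
    have h2 : a k = (∫ x in (0:ℝ)..1, f (x + y*I) * Complex.exp (-(2*Real.pi*I*k)*x))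
        * Complex.exp ((2*Real.pi*k*y : ℝ)) := by
      rw [E, mul_assoc, ← Complex.exp_add, ← Complex.ofReal_add, neg_add_cancel,
        Complex.ofReal_zero, Complex.exp_zero, mul_one]
    rw [h2, ← intervalIntegral.integral_mul_const]
    apply intervalIntegral.integral_congr
    intro x _
    show f (↑x + ↑y*I) * Complex.exp (-(2*Real.pi*I*k)*x) * Complex.exp ((2*Real.pi*k*y : ℝ)) = _
    rw [mul_assoc, ← Complex.exp_add]
    show _ = f (↑x + ↑y*I) * Complex.exp (2*Real.pi*y - 2*Real.pi*I*x) ^ k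
    rw [← Complex.exp_nat_mul]
    congr 1
    push_cast
    ring_nf
  rw [Finset.sum_congr rfl hek, ← intervalIntegral.integral_finset_sum]
  · congr 1
    funext x
    rw [Finset.mul_sum]
  · intro k hk
    exact (hcf.mul ((Complex.continuous_exp.comp (by continuity)).pow k)).intervalIntegrable _ _

lemma aux_wnorm (y x : ℝ) : ‖Complex.exp (2*Real.pi*y - 2*Real.pi*I*x)‖ = Real.exp (2*Real.pi*y) := by
  rw [Complex.norm_exp]
  congr 1
  simp [Complex.sub_re, Complex.mul_re]

lemma aux_wsub (y x : ℝ) (hy : 0 ≤ y) (hs : 0 ≤ Real.sin (Real.pi*x)) :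
    2 * Real.sin (Real.pi*x) ≤ ‖Complex.exp (2*Real.pi*y - 2*Real.pi*I*x) - 1‖ := by
  set w := Complex.exp (2*(Real.pi:ℂ)*y - 2*Real.pi*I*x) with hw
  have hre : (2*(Real.pi:ℂ)*y - 2*Real.pi*I*x).re = 2*Real.pi*y := by
    simp [Complex.sub_re, Complex.mul_re]
  have him : (2*(Real.pi:ℂ)*y - 2*Real.pi*I*x).im = -(2*Real.pi*x) := by
    simp [Complex.sub_im, Complex.mul_im]
  have hwre : w.re = Real.exp (2*Real.pi*y) * Real.cos (2*Real.pi*x) := by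
    rw [hw, Complex.exp_re, hre, him, Real.cos_neg]
  have hwim : w.im = -(Real.exp (2*Real.pi*y) * Real.sin (2*Real.pi*x)) := by
    rw [hw, Complex.exp_im, hre, him, Real.sin_neg]; ring
  have hsq : ‖w - 1‖^2 = Real.exp (2*Real.pi*y)^2 - 2*Real.exp (2*Real.pi*y)*Real.cos (2*Real.pi*x) + 1 := by
    rw [Complex.sq_norm, Complex.normSq_apply, Complex.sub_re, Complex.sub_im,
      hwre, hwim]
    have := Real.sin_sq_add_cos_sq (2*Real.pi*x)
    simp only [Complex.one_re, Complex.one_im]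
    nlinarith [this]
  have hA : (1:ℝ) ≤ Real.exp (2*Real.pi*y) := Real.one_le_exp (by positivity)
  have hcos2 : Real.cos (2*Real.pi*x) = 1 - 2*Real.sin (Real.pi*x)^2 := by
    rw [show (2*Real.pi*x) = 2*(Real.pi*x) by ring, Real.cos_two_mul]
    nlinarith [Real.sin_sq_add_cos_sq (Real.pi*x)]
  have key : (2 * Real.sin (Real.pi*x))^2 ≤ ‖w - 1‖^2 := by
    rw [hsq, hcos2]
    nlinarith [Real.cos_le_one (2*Real.pi*x), hA, Real.sin_sq_add_cos_sq (Real.pi*x)]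
  have h2 : 0 ≤ 2 * Real.sin (Real.pi*x) := by linarith
  exact (pow_le_pow_iff_left₀ h2 (norm_nonneg _) (by norm_num)).mp key

lemma aux_g_bound' (K : ℕ) (hK : 1 ≤ K) (y x : ℝ) (hy : 0 ≤ y) (hyK : y ≤ 1/(K:ℝ)) :
    ‖∑ k ∈ Finset.Icc 1 K, Complex.exp (2*Real.pi*y - 2*Real.pi*I*x) ^ k‖
      ≤ K * Real.exp (2*Real.pi) := by
  have hK0 : (0:ℝ) < K := by positivity
  calc ‖∑ k ∈ Finset.Icc 1 K, Complex.exp (2*Real.pi*y - 2*Real.pi*I*x) ^ k‖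
      ≤ ∑ k ∈ Finset.Icc 1 K, ‖Complex.exp (2*Real.pi*y - 2*Real.pi*I*x) ^ k‖ :=
        norm_sum_le _ _
    _ ≤ ∑ k ∈ Finset.Icc 1 K, Real.exp (2*Real.pi) := by
        apply Finset.sum_le_sum
        intro k hk
        rw [Finset.mem_Icc] at hk
        rw [norm_pow, aux_wnorm, ← Real.exp_nat_mul]
        apply Real.exp_le_exp.mpr
        have hk2 : (k:ℝ) ≤ K := by exact_mod_cast hk.2
        have h3 : (k:ℝ) * y ≤ 1 := by
          calc (k:ℝ) * y ≤ (K:ℝ) * (1/(K:ℝ)) := by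
                apply mul_le_mul hk2 hyK hy (le_of_lt hK0)
            _ = 1 := by field_simp
        calc (k:ℝ) * (2*Real.pi*y) = 2*Real.pi*((k:ℝ)*y) := by ring
          _ ≤ 2*Real.pi*1 := mul_le_mul_of_nonneg_left h3 (by positivity)
          _ = 2*Real.pi := by ring
    _ = K * Real.exp (2*Real.pi) := by
        rw [Finset.sum_const, Nat.card_Icc]
        simp

lemma aux_g_bound (K : ℕ) (hK : 1 ≤ K) (y x : ℝ) (hy : 0 < y) (hyK : y ≤ 1/(K:ℝ))
    (hs : 0 < Real.sin (Real.pi * x)) :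
    ‖∑ k ∈ Finset.Icc 1 K, Complex.exp (2*Real.pi*y - 2*Real.pi*I*x) ^ k‖
      ≤ (Real.exp (4*Real.pi) + 3) / (2 * Real.sin (Real.pi*x)) := by
  set w := Complex.exp (2*(Real.pi:ℂ)*y - 2*Real.pi*I*x) with hw
  have hK0 : (0:ℝ) < K := by positivity
  have hwn : ‖w‖ = Real.exp (2*Real.pi*y) := aux_wnorm _ _
  have hw1 : w ≠ 1 := by
    intro h
    rw [h, norm_one] at hwn
    have h2 : Real.exp (2*Real.pi*y) = Real.exp 0 := by rw [Real.exp_zero]; exact hwn.symm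
    have h3 := Real.exp_injective h2
    nlinarith [Real.pi_pos]
  have hsub := aux_wsub y x hy.le hs.le
  have hsub0 : (0:ℝ) < 2 * Real.sin (Real.pi*x) := by linarith
  have hsubpos : (0:ℝ) < ‖w - 1‖ := lt_of_lt_of_le hsub0 hsub
  have hgeom : ∑ k ∈ Finset.Icc 1 K, w ^ k = (w^(K+1) - 1)/(w - 1) - 1 := by
    have h1 : ∑ k ∈ Finset.range (K+1), w ^ k = (w^(K+1) - 1)/(w - 1) := geom_sum_eq hw1 _
    have h2 : ∑ k ∈ Finset.range (K+1), w ^ k = w^0 + ∑ k ∈ Finset.Icc 1 K, w ^ k := by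
      rw [Finset.range_eq_Ico, Finset.sum_eq_sum_Ico_succ_bot (by omega), Finset.Ico_add_one_right_eq_Icc]
    rw [h2, pow_zero] at h1
    rw [← h1]; ring
  have hwK : ‖w^(K+1)‖ ≤ Real.exp (4*Real.pi) := by
    rw [norm_pow, hwn, ← Real.exp_nat_mul]
    apply Real.exp_le_exp.mpr
    have h3 : ((K:ℝ)+1) * y ≤ 2 := by
      have : ((K:ℝ)+1) * y ≤ ((K:ℝ)+1) * (1/(K:ℝ)) := by
        apply mul_le_mul_of_nonneg_left hyK (by positivity)
      have h4 : ((K:ℝ)+1) * (1/(K:ℝ)) ≤ 2 := by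
        have h5 : (1:ℝ) ≤ K := by exact_mod_cast hK
        rw [mul_one_div, div_le_iff₀ hK0]
        nlinarith
      linarith
    push_cast
    nlinarith [Real.pi_pos]
  calc ‖∑ k ∈ Finset.Icc 1 K, w ^ k‖ = ‖(w^(K+1) - 1)/(w - 1) - 1‖ := by rw [hgeom]
    _ ≤ ‖(w^(K+1) - 1)/(w - 1)‖ + 1 := by
        apply (norm_sub_le _ _).trans; simp
    _ = ‖w^(K+1) - 1‖/‖w - 1‖ + 1 := by rw [norm_div]
    _ ≤ (Real.exp (4*Real.pi) + 1)/(2 * Real.sin (Real.pi*x)) + 1 := by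
        gcongr
        apply (norm_sub_le _ _).trans
        simp only [norm_one]
        linarith
    _ ≤ (Real.exp (4*Real.pi) + 1)/(2 * Real.sin (Real.pi*x)) + 2/(2 * Real.sin (Real.pi*x)) := by
        gcongr
        rw [le_div_iff₀ hsub0]
        have := Real.sin_le_one (Real.pi*x)
        nlinarith
    _ = (Real.exp (4*Real.pi) + 3) / (2 * Real.sin (Real.pi*x)) := by
        rw [← add_div]
        ring_nf

lemma aux_gcont (K : ℕ) (y : ℝ) :
    Continuous fun x : ℝ => ∑ k ∈ Finset.Icc 1 K, Complex.exp (2*Real.pi*y - 2*Real.pi*I*x) ^ k := by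
  apply continuous_finset_sum
  intro k _
  exact (Complex.continuous_exp.comp (by continuity)).pow k

lemma aux_int_bound (K : ℕ) (hK : 2 ≤ K) (y : ℝ) (hyK : y = 1/(K:ℝ)) :
    ∫ x in (0:ℝ)..1, ‖∑ k ∈ Finset.Icc 1 K, Complex.exp (2*Real.pi*y - 2*Real.pi*I*x) ^ k‖
      ≤ (2*Real.exp (2*Real.pi)/Real.log 2 + (Real.exp (4*Real.pi)+3)/2) * Real.log K := by
  have hK1 : 1 ≤ K := by omega
  have hK0 : (0:ℝ) < K := by positivity
  have hK2 : (2:ℝ) ≤ K := by exact_mod_cast hK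
  have hy : 0 < y := by rw [hyK]; positivity
  have hy2 : y ≤ 1/2 := by
    rw [hyK]
    apply div_le_div_of_nonneg_left one_pos.le (by norm_num) hK2 |>.trans_eq rfl
  have hyK' : y ≤ 1/(K:ℝ) := le_of_eq hyK
  set G : ℝ → ℝ := fun x => ‖∑ k ∈ Finset.Icc 1 K, Complex.exp (2*Real.pi*y - 2*Real.pi*I*x) ^ k‖ with hG
  have hGc : Continuous G := (aux_gcont K y).norm
  have hGint : ∀ a b : ℝ, IntervalIntegrable G MeasureTheory.volume a b :=
    fun a b => hGc.intervalIntegrable a b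
  -- split points
  have hsplit : (∫ x in (0:ℝ)..1, G x)
      = (∫ x in (0:ℝ)..y, G x) + (∫ x in y..(1/2:ℝ), G x)
        + (∫ x in (1/2:ℝ)..(1-y), G x) + (∫ x in (1-y)..(1:ℝ), G x) := by
    rw [integral_add_adjacent_intervals (hGint 0 y) (hGint y (1/2)),
      integral_add_adjacent_intervals (hGint 0 (1/2)) (hGint (1/2) (1-y)),
      integral_add_adjacent_intervals (hGint 0 (1-y)) (hGint (1-y) 1)]
  have hKe : (0:ℝ) ≤ K * Real.exp (2*Real.pi) := by positivity
  -- piece 1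
  have h1 : (∫ x in (0:ℝ)..y, G x) ≤ Real.exp (2*Real.pi) := by
    calc (∫ x in (0:ℝ)..y, G x) ≤ ∫ _x in (0:ℝ)..y, (K * Real.exp (2*Real.pi)) := by
          apply integral_mono_on hy.le (hGint 0 y) intervalIntegrable_const
          intro x _
          exact aux_g_bound' K hK1 y x hy.le hyK'
      _ = y * (K * Real.exp (2*Real.pi)) := by rw [integral_const, smul_eq_mul, sub_zero]
      _ = Real.exp (2*Real.pi) := by rw [hyK]; field_simp
  -- piece 4
  have h4 : (∫ x in (1-y)..(1:ℝ), G x) ≤ Real.exp (2*Real.pi) := by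
    calc (∫ x in (1-y)..(1:ℝ), G x) ≤ ∫ _x in (1-y)..(1:ℝ), (K * Real.exp (2*Real.pi)) := by
          apply integral_mono_on (by linarith) (hGint _ _) intervalIntegrable_const
          intro x _
          exact aux_g_bound' K hK1 y x hy.le hyK'
      _ = (1 - (1-y)) * (K * Real.exp (2*Real.pi)) := by rw [integral_const, smul_eq_mul]
      _ = Real.exp (2*Real.pi) := by rw [hyK]; field_simp; ring
  -- inv integrable on [y, 1/2]
  have hinv : IntervalIntegrable (fun x : ℝ => (Real.exp (4*Real.pi)+3)/4 * x⁻¹)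
      MeasureTheory.volume y (1/2) := by
    apply ContinuousOn.intervalIntegrable
    apply ContinuousOn.mul continuousOn_const
    apply ContinuousOn.inv₀ continuousOn_id
    intro x hx
    rw [Set.uIcc_of_le hy2] at hx
    exact ne_of_gt (lt_of_lt_of_le hy hx.1)
  have hloginv : (∫ x in y..(1/2:ℝ), x⁻¹) = Real.log ((K:ℝ)/2) := by
    rw [integral_inv]
    · congr 1
      rw [hyK]
      field_simp
    · rw [Set.uIcc_of_le hy2]
      intro h
      exact absurd h.1 (by linarith)
  -- pointwise bound on [y, 1/2]
  have hpt : ∀ x ∈ Set.Icc y (1/2:ℝ), G x ≤ (Real.exp (4*Real.pi)+3)/4 * x⁻¹ := by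
    intro x hx
    have hx0 : 0 < x := lt_of_lt_of_le hy hx.1
    have hsin : 2 * x ≤ Real.sin (Real.pi * x) := by
      have := Real.mul_le_sin (x := Real.pi * x) (by positivity)
        (by nlinarith [Real.pi_pos, hx.2])
      calc 2 * x = 2/Real.pi * (Real.pi * x) := by
            field_simp
        _ ≤ Real.sin (Real.pi * x) := this
    have hsin0 : 0 < Real.sin (Real.pi * x) := by nlinarith
    calc G x ≤ (Real.exp (4*Real.pi) + 3) / (2 * Real.sin (Real.pi*x)) :=
          aux_g_bound K hK1 y x hy hyK' hsin0
      _ ≤ (Real.exp (4*Real.pi) + 3) / (2 * (2*x)) := by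
          apply div_le_div_of_nonneg_left (by positivity) (by positivity) (by nlinarith)
      _ = (Real.exp (4*Real.pi)+3)/4 * x⁻¹ := by
          rw [show (2:ℝ)*(2*x) = 4*x by ring, ← div_div, div_eq_mul_inv]
  have h2 : (∫ x in y..(1/2:ℝ), G x) ≤ (Real.exp (4*Real.pi)+3)/4 * Real.log ((K:ℝ)/2) := by
    calc (∫ x in y..(1/2:ℝ), G x) ≤ ∫ x in y..(1/2:ℝ), (Real.exp (4*Real.pi)+3)/4 * x⁻¹ := by
          apply integral_mono_on hy2 (hGint _ _) hinv
          exact hpt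
      _ = (Real.exp (4*Real.pi)+3)/4 * Real.log ((K:ℝ)/2) := by
          rw [integral_const_mul, hloginv]
  -- piece 3 via reflection
  have h3 : (∫ x in (1/2:ℝ)..(1-y), G x) ≤ (Real.exp (4*Real.pi)+3)/4 * Real.log ((K:ℝ)/2) := by
    have hrefl : (∫ x in (1/2:ℝ)..(1-y), (Real.exp (4*Real.pi)+3)/4 * (1-x)⁻¹)
        = (Real.exp (4*Real.pi)+3)/4 * Real.log ((K:ℝ)/2) := by
      have := intervalIntegral.integral_comp_sub_left (a := (1/2:ℝ)) (b := 1-y)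
        (fun t : ℝ => (Real.exp (4*Real.pi)+3)/4 * t⁻¹) 1
      rw [this, show (1:ℝ)-(1-y) = y by ring, show (1:ℝ)-1/2 = (1/2:ℝ) by norm_num,
        integral_const_mul, hloginv]
    have hint2 : IntervalIntegrable (fun x : ℝ => (Real.exp (4*Real.pi)+3)/4 * (1-x)⁻¹)
        MeasureTheory.volume (1/2) (1-y) := by
      apply ContinuousOn.intervalIntegrable
      apply ContinuousOn.mul continuousOn_const
      apply ContinuousOn.inv₀ (by fun_prop)
      intro x hx
      rw [Set.uIcc_of_le (by linarith)] at hx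
      have := hx.2
      intro h
      have : x = 1 := by linarith [sub_eq_zero.mp h]
      linarith [hx.2, hy]
    rw [← hrefl]
    apply integral_mono_on (by linarith) (hGint _ _) hint2
    intro x hx
    have hx1 : x ≤ 1 - y := hx.2
    have h1x0 : 0 < 1 - x := by linarith
    have hsin : 2 * (1-x) ≤ Real.sin (Real.pi * x) := by
      have heq : Real.sin (Real.pi * x) = Real.sin (Real.pi * (1-x)) := by
        rw [show Real.pi * (1-x) = Real.pi - Real.pi * x by ring, Real.sin_pi_sub]
      rw [heq]
      have := Real.mul_le_sin (x := Real.pi * (1-x)) (by positivity)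
        (by nlinarith [Real.pi_pos, hx.1])
      calc 2 * (1-x) = 2/Real.pi * (Real.pi * (1-x)) := by
            field_simp
        _ ≤ _ := this
    have hsin0 : 0 < Real.sin (Real.pi * x) := by nlinarith
    calc G x ≤ (Real.exp (4*Real.pi) + 3) / (2 * Real.sin (Real.pi*x)) :=
          aux_g_bound K hK1 y x hy hyK' hsin0
      _ ≤ (Real.exp (4*Real.pi) + 3) / (2 * (2*(1-x))) := by
          apply div_le_div_of_nonneg_left (by positivity) (by positivity) (by nlinarith)
      _ = (Real.exp (4*Real.pi)+3)/4 * (1-x)⁻¹ := by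
          rw [show (2:ℝ)*(2*(1-x)) = 4*(1-x) by ring, ← div_div, div_eq_mul_inv]
  -- combine
  have hlog2 : (0:ℝ) < Real.log 2 := Real.log_pos (by norm_num)
  have hlogK2 : Real.log ((K:ℝ)/2) ≤ Real.log K := by
    apply Real.log_le_log (by positivity)
    linarith
  have hlogK : Real.log 2 ≤ Real.log K := Real.log_le_log (by norm_num) hK2
  have hlogK0 : (0:ℝ) < Real.log K := lt_of_lt_of_le hlog2 hlogK
  rw [hsplit]
  have hexp0 : (0:ℝ) < Real.exp (2*Real.pi) := Real.exp_pos _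
  have hc1 : (0:ℝ) ≤ (Real.exp (4*Real.pi)+3)/4 := by positivity
  calc (∫ x in (0:ℝ)..y, G x) + (∫ x in y..(1/2:ℝ), G x)
        + (∫ x in (1/2:ℝ)..(1-y), G x) + (∫ x in (1-y)..(1:ℝ), G x)
      ≤ Real.exp (2*Real.pi) + (Real.exp (4*Real.pi)+3)/4 * Real.log ((K:ℝ)/2)
        + (Real.exp (4*Real.pi)+3)/4 * Real.log ((K:ℝ)/2) + Real.exp (2*Real.pi) := by
        linarith
    _ ≤ 2*Real.exp (2*Real.pi)/Real.log 2 * Real.log K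
        + (Real.exp (4*Real.pi)+3)/2 * Real.log K := by
        have e1 : Real.exp (2*Real.pi) + Real.exp (2*Real.pi)
            ≤ 2*Real.exp (2*Real.pi)/Real.log 2 * Real.log K := by
          rw [div_mul_eq_mul_div, le_div_iff₀ hlog2]
          have : 2*Real.exp (2*Real.pi) * Real.log 2 ≤ 2*Real.exp (2*Real.pi) * Real.log K := by
            apply mul_le_mul_of_nonneg_left hlogK (by positivity)
          nlinarith
        have e2 : (Real.exp (4*Real.pi)+3)/4 * Real.log ((K:ℝ)/2)
            + (Real.exp (4*Real.pi)+3)/4 * Real.log ((K:ℝ)/2)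
            ≤ (Real.exp (4*Real.pi)+3)/2 * Real.log K := by
          have ha : (Real.exp (4*Real.pi)+3)/4 * Real.log ((K:ℝ)/2)
              ≤ (Real.exp (4*Real.pi)+3)/4 * Real.log K :=
            mul_le_mul_of_nonneg_left hlogK2 hc1
          have hb : (Real.exp (4*Real.pi)+3)/2 * Real.log K
              = (Real.exp (4*Real.pi)+3)/4 * Real.log K
                + (Real.exp (4*Real.pi)+3)/4 * Real.log K := by ring
          linarith
        linarith
    _ = (2*Real.exp (2*Real.pi)/Real.log 2 + (Real.exp (4*Real.pi)+3)/2) * Real.log K := by ring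

/-- Partial sums of the Fourier coefficients of a holomorphic cusp form of weight `r`
(i.e. `f(z) = Σ_{k ≥ 1} a_k e^{2πikz}` with `(Im z)^{r/2} |f(z)|` bounded on the upper
half plane) satisfy `Σ_{k ≤ K} a_k = O(K^{r/2} log K)`. -/
theorem cusp_form_coeff_sum (r : ℝ) (f : ℂ → ℂ) (a : ℕ → ℂ)
    (hhol : DifferentiableOn ℂ f {z : ℂ | 0 < z.im})
    (hexp : ∀ z : ℂ, 0 < z.im →
      HasSum (fun k : ℕ => a (k + 1) * Complex.exp (2 * Real.pi * I * (k + 1) * z)) (f z))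
    (hbd : ∃ B : ℝ, ∀ z : ℂ, 0 < z.im → z.im ^ (r / 2) * ‖f z‖ ≤ B) :
    ∃ C : ℝ, ∀ K : ℕ, 2 ≤ K →
      ‖∑ k ∈ Finset.Icc 1 K, a k‖ ≤ C * (K : ℝ) ^ (r / 2) * Real.log K := by
  obtain ⟨B, hB⟩ := hbd
  set B' : ℝ := max B 0 with hB'
  have hB'0 : 0 ≤ B' := le_max_right _ _
  set c2 : ℝ := 2*Real.exp (2*Real.pi)/Real.log 2 + (Real.exp (4*Real.pi)+3)/2 with hc2
  have hc20 : 0 ≤ c2 := by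
    have := Real.log_pos (show (1:ℝ) < 2 by norm_num)
    positivity
  refine ⟨B' * c2, fun K hK => ?_⟩
  have hK0 : (0:ℝ) < K := by positivity
  set y : ℝ := 1/(K:ℝ) with hy'
  have hy : 0 < y := by positivity
  have hKr : (0:ℝ) < (K:ℝ) ^ (r/2) := Real.rpow_pos_of_pos hK0 _
  -- bound on f along the line
  have hf : ∀ x : ℝ, ‖f (↑x + ↑y*I)‖ ≤ B' * (K:ℝ) ^ (r/2) := by
    intro x
    have him : (↑x + ↑y*I : ℂ).im = y := by simp
    have h1 := hB (↑x + ↑y*I) (by rw [him]; exact hy)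
    rw [him] at h1
    have h2 : y ^ (r/2) = ((K:ℝ) ^ (r/2))⁻¹ := by
      rw [hy', one_div, Real.inv_rpow hK0.le]
    rw [h2] at h1
    have h3 : ((K:ℝ) ^ (r/2))⁻¹ * ‖f (↑x + ↑y*I)‖ ≤ B' := le_trans h1 (le_max_left _ _)
    rw [inv_mul_le_iff₀ hKr] at h3
    calc ‖f (↑x + ↑y*I)‖ ≤ (K:ℝ)^(r/2) * B' := h3
      _ = B' * (K:ℝ)^(r/2) := mul_comm _ _
  have hcf := aux_cont f hhol y hy
  have hgc := aux_gcont K y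
  have hgnorm : (0:ℝ) ≤ 1 := zero_le_one
  rw [aux_main_id f a hhol hexp y hy K]
  calc ‖∫ x in (0:ℝ)..1, f (↑x + ↑y*I) * ∑ k ∈ Finset.Icc 1 K,
          Complex.exp (2*Real.pi*y - 2*Real.pi*I*x) ^ k‖
      ≤ ∫ x in (0:ℝ)..1, ‖f (↑x + ↑y*I) * ∑ k ∈ Finset.Icc 1 K,
          Complex.exp (2*Real.pi*y - 2*Real.pi*I*x) ^ k‖ :=
        intervalIntegral.norm_integral_le_integral_norm zero_le_one
    _ ≤ ∫ x in (0:ℝ)..1, (B' * (K:ℝ)^(r/2)) * ‖∑ k ∈ Finset.Icc 1 K,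
          Complex.exp (2*Real.pi*y - 2*Real.pi*I*x) ^ k‖ := by
        apply integral_mono_on zero_le_one
          ((hcf.mul hgc).norm.intervalIntegrable _ _)
          ((continuous_const.mul hgc.norm).intervalIntegrable _ _)
        intro x _
        rw [Pi.mul_apply, Pi.mul_apply, norm_mul]
        apply mul_le_mul_of_nonneg_right (hf x) (norm_nonneg _)
    _ = (B' * (K:ℝ)^(r/2)) * ∫ x in (0:ℝ)..1, ‖∑ k ∈ Finset.Icc 1 K,
          Complex.exp (2*Real.pi*y - 2*Real.pi*I*x) ^ k‖ := integral_const_mul _ _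
    _ ≤ (B' * (K:ℝ)^(r/2)) * (c2 * Real.log K) := by
        apply mul_le_mul_of_nonneg_left (aux_int_bound K hK y hy') (by positivity)
    _ = B' * c2 * (K:ℝ)^(r/2) * Real.log K := by ring
end

section
/- For even N = 2n, the eigenvalue counting function of the Laplacian on SO(2n) satisfies N(λ) = (1/(2^{n−1} n!)) Σ_{x ∈ ℤⁿ, ‖x‖² ≤ R²} m(x), where R² = λ + n(n−1)(2n−1)/6 and m(x) = (Π_{0 ≤ i < j ≤ n−1} (x_{n−j}² − x_{n−i}²)/(j² − i²))². -/
open Finset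

open scoped Classical

/-- Weyl's dimension formula multiplicity for SO(2n), as a function of
`x_j = b_j + n - j` (here `x` is 0-indexed, so `x_j` is `x (j-1)`):
`m(x) = (Π_{0 ≤ i < j ≤ n-1} (x_{n-j}² − x_{n-i}²)/(j² − i²))²`. -/
noncomputable def multSOeven (n : ℕ) (hn : 0 < n) (x : Fin n → ℤ) : ℝ :=
  (∏ i ∈ Finset.range n, ∏ j ∈ Finset.Ico (i + 1) n,
      (((x ⟨n - 1 - j, by omega⟩ : ℤ) : ℝ) ^ 2 - ((x ⟨n - 1 - i, by omega⟩ : ℤ) : ℝ) ^ 2) /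
        ((j : ℝ) ^ 2 - (i : ℝ) ^ 2)) ^ 2

def pairs (n : ℕ) : Finset (Fin n × Fin n) := Finset.univ.filter (fun p => p.1 < p.2)

noncomputable def denomC (n : ℕ) : ℝ :=
  (∏ i ∈ Finset.range n, ∏ j ∈ Finset.Ico (i + 1) n, ((j : ℝ) ^ 2 - (i : ℝ) ^ 2)) ^ 2

lemma multSOeven_eq (n : ℕ) (hn : 0 < n) (x : Fin n → ℤ) :
    multSOeven n hn x =
      (∏ p ∈ pairs n, (((x p.1 : ℤ) : ℝ) ^ 2 - ((x p.2 : ℤ) : ℝ) ^ 2) ^ 2) / denomC n := by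
  rw [multSOeven, denomC]
  have h1 : (∏ i ∈ Finset.range n, ∏ j ∈ Finset.Ico (i + 1) n,
      (((x ⟨n - 1 - j, by omega⟩ : ℤ) : ℝ) ^ 2 - ((x ⟨n - 1 - i, by omega⟩ : ℤ) : ℝ) ^ 2) /
        ((j : ℝ) ^ 2 - (i : ℝ) ^ 2))
      = (∏ i ∈ Finset.range n, ∏ j ∈ Finset.Ico (i + 1) n,
          (((x ⟨n - 1 - j, by omega⟩ : ℤ) : ℝ) ^ 2 - ((x ⟨n - 1 - i, by omega⟩ : ℤ) : ℝ) ^ 2)) /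
        (∏ i ∈ Finset.range n, ∏ j ∈ Finset.Ico (i + 1) n, ((j : ℝ) ^ 2 - (i : ℝ) ^ 2)) := by
    rw [← Finset.prod_div_distrib]
    exact Finset.prod_congr rfl fun i _ => by rw [Finset.prod_div_distrib]
  rw [h1, div_pow]
  congr 1
  rw [← Finset.prod_pow]
  have h2 : ∀ i ∈ Finset.range n, (∏ j ∈ Finset.Ico (i + 1) n,
      (((x ⟨n - 1 - j, by omega⟩ : ℤ) : ℝ) ^ 2 - ((x ⟨n - 1 - i, by omega⟩ : ℤ) : ℝ) ^ 2)) ^ 2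
      = ∏ j ∈ Finset.Ico (i + 1) n,
      ((((x ⟨n - 1 - j, by omega⟩ : ℤ) : ℝ) ^ 2 - ((x ⟨n - 1 - i, by omega⟩ : ℤ) : ℝ) ^ 2)) ^ 2 := by
    intro i _; rw [← Finset.prod_pow]
  rw [Finset.prod_congr rfl h2, Finset.prod_sigma']
  refine Finset.prod_nbij' (fun q => (⟨n - 1 - q.2, by omega⟩, ⟨n - 1 - q.1, by omega⟩))
    (fun p => ⟨n - 1 - (p.2 : ℕ), n - 1 - (p.1 : ℕ)⟩) ?_ ?_ ?_ ?_ ?_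
  · rintro ⟨i, j⟩ hq
    simp only [Finset.mem_sigma, Finset.mem_range, Finset.mem_Ico] at hq
    simp only [pairs, Finset.mem_filter, Finset.mem_univ, true_and, Fin.mk_lt_mk]
    omega
  · rintro ⟨a, b⟩ hp
    simp only [pairs, Finset.mem_filter, Finset.mem_univ, true_and, Fin.lt_def] at hp
    simp only [Finset.mem_sigma, Finset.mem_range, Finset.mem_Ico]
    have ha := a.isLt; have hb := b.isLt
    omega
  · rintro ⟨i, j⟩ hq
    simp only [Finset.mem_sigma, Finset.mem_range, Finset.mem_Ico] at hq
    simp only [Fin.val_mk]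
    congr 1 <;> omega
  · rintro ⟨a, b⟩ hp
    simp only [pairs, Finset.mem_filter, Finset.mem_univ, true_and, Fin.lt_def] at hp
    have ha := a.isLt; have hb := b.isLt
    ext <;> simp <;> omega
  · rintro ⟨i, j⟩ hq
    rfl

lemma prod_pairs_perm {n : ℕ} (X : Fin n → ℝ) (σ : Equiv.Perm (Fin n)) :
    ∏ p ∈ pairs n, (X (σ p.1) - X (σ p.2)) ^ 2 = ∏ p ∈ pairs n, (X p.1 - X p.2) ^ 2 := by
  refine Finset.prod_nbij'
    (fun p => if σ p.1 < σ p.2 then (σ p.1, σ p.2) else (σ p.2, σ p.1))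
    (fun p => if σ⁻¹ p.1 < σ⁻¹ p.2 then (σ⁻¹ p.1, σ⁻¹ p.2) else (σ⁻¹ p.2, σ⁻¹ p.1))
    ?_ ?_ ?_ ?_ ?_
  · rintro ⟨a, b⟩ hp
    simp only [pairs, Finset.mem_filter, Finset.mem_univ, true_and] at hp ⊢
    have hab : σ a ≠ σ b := fun h => absurd (σ.injective h) (ne_of_lt hp)
    rcases lt_or_gt_of_ne hab with h | h
    · simp [h]
    · simp [not_lt.mpr h.le, h, if_neg (not_lt.mpr h.le)]
  · rintro ⟨a, b⟩ hp
    simp only [pairs, Finset.mem_filter, Finset.mem_univ, true_and] at hp ⊢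
    have hab : σ⁻¹ a ≠ σ⁻¹ b := fun h => absurd (σ⁻¹.injective h) (ne_of_lt hp)
    rcases lt_or_gt_of_ne hab with h | h
    · rw [Equiv.Perm.inv_def] at h; simp [h]
    · rw [Equiv.Perm.inv_def] at h; simp [if_neg (not_lt.mpr h.le), h]
  · rintro ⟨a, b⟩ hp
    simp only [pairs, Finset.mem_filter, Finset.mem_univ, true_and] at hp
    have hab : σ a ≠ σ b := fun h => absurd (σ.injective h) (ne_of_lt hp)
    rcases lt_or_gt_of_ne hab with h | h
    · simp [h, hp]
    · simp [if_neg (not_lt.mpr h.le), hp, if_pos hp, not_lt.mpr hp.le]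
  · rintro ⟨a, b⟩ hp
    simp only [pairs, Finset.mem_filter, Finset.mem_univ, true_and] at hp
    have hab : σ⁻¹ a ≠ σ⁻¹ b := fun h => absurd (σ⁻¹.injective h) (ne_of_lt hp)
    rcases lt_or_gt_of_ne hab with h | h
    · rw [Equiv.Perm.inv_def] at h; simp [h, hp]
    · rw [Equiv.Perm.inv_def] at h; simp [if_neg (not_lt.mpr h.le), hp, if_pos hp, not_lt.mpr hp.le]
  · rintro ⟨a, b⟩ hp
    by_cases h : σ a < σ b
    · simp [h]
    · simp only [if_neg h]
      ring


lemma multSOeven_invar {n : ℕ} (hn : 0 < n) (σ : Equiv.Perm (Fin n)) (x y : Fin n → ℤ)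
    (h : ∀ i, ((x i : ℤ) : ℝ) ^ 2 = ((y (σ i) : ℤ) : ℝ) ^ 2) :
    multSOeven n hn x = multSOeven n hn y := by
  rw [multSOeven_eq, multSOeven_eq]
  congr 1
  calc ∏ p ∈ pairs n, (((x p.1 : ℤ) : ℝ) ^ 2 - ((x p.2 : ℤ) : ℝ) ^ 2) ^ 2
      = ∏ p ∈ pairs n, ((fun i => ((y i : ℤ) : ℝ) ^ 2) (σ p.1)
          - (fun i => ((y i : ℤ) : ℝ) ^ 2) (σ p.2)) ^ 2 := by
        refine Finset.prod_congr rfl fun p _ => ?_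
        simp only [h p.1, h p.2]
    _ = ∏ p ∈ pairs n, (((y p.1 : ℤ) : ℝ) ^ 2 - ((y p.2 : ℤ) : ℝ) ^ 2) ^ 2 :=
        prod_pairs_perm (fun i => ((y i : ℤ) : ℝ) ^ 2) σ

lemma multSOeven_eq_zero {n : ℕ} (hn : 0 < n) (x : Fin n → ℤ) (a b : Fin n) (hab : a ≠ b)
    (h : |x a| = |x b|) : multSOeven n hn x = 0 := by
  rw [multSOeven_eq]
  have hsq : ((x a : ℤ) : ℝ) ^ 2 = ((x b : ℤ) : ℝ) ^ 2 := by
    have : (x a) ^ 2 = (x b) ^ 2 := by rw [← sq_abs (x a), ← sq_abs (x b), h]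
    exact_mod_cast congrArg (fun t : ℤ => (t : ℝ)) this
  rcases lt_or_gt_of_ne hab with hlt | hlt
  · rw [Finset.prod_eq_zero (i := (a, b)) (by simp [pairs, hlt]) (by simp [hsq]), zero_div]
  · rw [Finset.prod_eq_zero (i := (b, a)) (by simp [pairs, hlt]) (by simp [hsq]), zero_div]

/-- The chain condition from the theorem statement. -/
def ChainCond (n : ℕ) (x : Fin n → ℤ) : Prop :=
  ∀ i : ℕ, ∀ h : i + 1 < n,
    (if i + 1 = n - 1 then |x ⟨i + 1, by omega⟩| < x ⟨i, Nat.lt_of_succ_lt h⟩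
      else x ⟨i + 1, by omega⟩ < x ⟨i, Nat.lt_of_succ_lt h⟩)

lemma ChainCond.pos {n : ℕ} {x : Fin n → ℤ} (hc : ChainCond n x) :
    ∀ i : ℕ, ∀ h : i + 1 < n, 0 < x ⟨i, Nat.lt_of_succ_lt h⟩ := by
  have key : ∀ k : ℕ, ∀ i : ℕ, ∀ h : i + 1 < n, n - 1 - i ≤ k + 1 → 0 < x ⟨i, by omega⟩ := by
    intro k
    induction k with
    | zero =>
      intro i h hk
      have hi : i + 1 = n - 1 := by omega
      have := hc i h
      rw [if_pos hi] at this
      exact lt_of_le_of_lt (abs_nonneg _) this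
    | succ k ih =>
      intro i h hk
      by_cases hk' : n - 1 - i ≤ k + 1
      · exact ih i h hk'
      · have hi : i + 1 < n - 1 := by omega
        have h2 : (i + 1) + 1 < n := by omega
        have hpos := ih (i + 1) h2 (by omega)
        have := hc i h
        rw [if_neg (by omega)] at this
        exact lt_trans hpos this
  intro i h
  exact key (n - 1 - i) i h (by omega)

lemma ChainCond.abs_strictAnti {n : ℕ} {x : Fin n → ℤ} (hc : ChainCond n x) :
    ∀ a b : Fin n, a < b → |x b| < |x a| := by
  have step : ∀ i : ℕ, ∀ h : i + 1 < n, |x ⟨i + 1, by omega⟩| < |x ⟨i, by omega⟩| := by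
    intro i h
    have hpos : 0 < x ⟨i, by omega⟩ := hc.pos i h
    rw [abs_of_pos hpos]
    by_cases hi : i + 1 = n - 1
    · have := hc i h; rwa [if_pos hi] at this
    · have h2 : (i + 1) + 1 < n := by omega
      have hpos2 : 0 < x ⟨i + 1, by omega⟩ := hc.pos (i + 1) h2
      rw [abs_of_pos hpos2]
      have := hc i h; rwa [if_neg hi] at this
  have key : ∀ b : ℕ, ∀ a : ℕ, ∀ _ha : a < b, ∀ hb : b < n, |x ⟨b, hb⟩| < |x ⟨a, by omega⟩| := by
    intro b
    induction b with
    | zero => intro a ha; omega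
    | succ b ih =>
      intro a ha hb
      rcases Nat.lt_or_ge a b with h' | h'
      · exact lt_trans (step b hb) (ih a h' (by omega))
      · have : a = b := by omega
        subst this
        exact step a hb
  intro a b hab
  have := key b.1 a.1 hab b.isLt
  simpa using this

def sgnOf {n : ℕ} (ε : Fin (n - 1) → Bool) (k : Fin n) : ℤ :=
  if h : (k : ℕ) < n - 1 then (if ε ⟨k, h⟩ then -1 else 1) else 1

lemma abs_sgnOf {n : ℕ} (ε : Fin (n - 1) → Bool) (k : Fin n) : |sgnOf ε k| = 1 := by
  rw [sgnOf]
  split_ifs <;> simp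

def Phi {n : ℕ} (q : (Fin n → ℤ) × Equiv.Perm (Fin n) × (Fin (n - 1) → Bool)) : Fin n → ℤ :=
  fun i => sgnOf q.2.2 (q.2.1⁻¹ i) * q.1 (q.2.1⁻¹ i)

lemma abs_phi {n : ℕ} (q : (Fin n → ℤ) × Equiv.Perm (Fin n) × (Fin (n - 1) → Bool)) (i : Fin n) :
    |Phi q i| = |q.1 (q.2.1⁻¹ i)| := by
  rw [Phi, abs_mul, abs_sgnOf, one_mul]

noncomputable def sortPerm {n : ℕ} (x : Fin n → ℤ) : Equiv.Perm (Fin n) :=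
  Tuple.sort (fun i => -|x i|)

noncomputable def Psi {n : ℕ} (x : Fin n → ℤ) :
    (Fin n → ℤ) × Equiv.Perm (Fin n) × (Fin (n - 1) → Bool) :=
  (fun i => if (i : ℕ) = n - 1 then x (sortPerm x i) else |x (sortPerm x i)|,
   sortPerm x, fun k => decide (x (sortPerm x ⟨k.1, by omega⟩) < 0))

lemma sortPerm_strictAnti {n : ℕ} (x : Fin n → ℤ)
    (hd : ∀ a b : Fin n, a ≠ b → |x a| ≠ |x b|) :
    ∀ i j : Fin n, i < j → |x (sortPerm x j)| < |x (sortPerm x i)| := by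
  intro i j hij
  have hm := Tuple.monotone_sort (fun i => -|x i|) (le_of_lt hij)
  simp only [Function.comp_apply] at hm
  have hle : |x (sortPerm x j)| ≤ |x (sortPerm x i)| := by
    have := neg_le_neg hm
    simpa [sortPerm] using hm
  refine lt_of_le_of_ne hle (hd _ _ ?_)
  exact fun h => absurd ((sortPerm x).injective h) (Ne.symm (ne_of_lt hij))

lemma sortPerm_phi {n : ℕ} (y : Fin n → ℤ) (σ : Equiv.Perm (Fin n)) (ε : Fin (n - 1) → Bool)
    (hc : ChainCond n y) : sortPerm (Phi (y, σ, ε)) = σ := by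
  have habs : ∀ i, |Phi (y, σ, ε) i| = |y (σ⁻¹ i)| := fun i => abs_phi _ i
  have hanti := hc.abs_strictAnti
  symm
  rw [sortPerm]
  rw [Tuple.eq_sort_iff]
  constructor
  · intro i j hij
    simp only [Function.comp_apply]
    rcases eq_or_lt_of_le hij with h | h
    · rw [h]
    · have : |y j| < |y i| := hanti i j h
      have h1 : |Phi (y, σ, ε) (σ i)| = |y i| := by rw [habs]; simp
      have h2 : |Phi (y, σ, ε) (σ j)| = |y j| := by rw [habs]; simp
      simp only [neg_le_neg_iff]
      rw [h1, h2]
      exact le_of_lt this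
  · intro i j hij heq
    exfalso
    have h1 : |Phi (y, σ, ε) (σ i)| = |y i| := by rw [habs]; simp
    have h2 : |Phi (y, σ, ε) (σ j)| = |y j| := by rw [habs]; simp
    rw [neg_inj, h1, h2] at heq
    exact absurd heq (ne_of_gt (hanti i j hij))
lemma key_sum (n : ℕ) (hn : 0 < n) (M : ℤ) (R : ℝ) :
    (∑ x ∈ (Fintype.piFinset fun _ : Fin n => Finset.Icc (-M) M).filter
        (fun x => ∑ i, ((x i : ℤ) : ℝ) ^ 2 ≤ R ^ 2), multSOeven n hn x)
      = (2 : ℝ) ^ (n - 1) * (n.factorial : ℝ) *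
        ∑ x ∈ (Fintype.piFinset fun _ : Fin n => Finset.Icc (-M) M).filter
          (fun x => ChainCond n x ∧ ∑ i, ((x i : ℤ) : ℝ) ^ 2 ≤ R ^ 2), multSOeven n hn x := by
  classical
  set B : Finset (Fin n → ℤ) := Fintype.piFinset fun _ : Fin n => Finset.Icc (-M) M with hB
  have memB : ∀ x : Fin n → ℤ, x ∈ B ↔ ∀ i, |x i| ≤ M := by
    intro x
    simp [hB, Fintype.mem_piFinset, Finset.mem_Icc, abs_le]
  set Pn : (Fin n → ℤ) → Prop := fun x => ∑ i, ((x i : ℤ) : ℝ) ^ 2 ≤ R ^ 2 with hPn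
  set Dist : (Fin n → ℤ) → Prop := fun x => ∀ a b : Fin n, a ≠ b → |x a| ≠ |x b| with hDist
  set D : Finset (Fin n → ℤ) := B.filter (fun x => ChainCond n x ∧ Pn x) with hD
  set T : Finset (Fin n → ℤ) := B.filter (fun x => Pn x ∧ Dist x) with hT
  -- Step 1: restrict to distinct absolute values
  have step1 : ∑ x ∈ B.filter Pn, multSOeven n hn x = ∑ x ∈ T, multSOeven n hn x := by
    refine (Finset.sum_subset ?_ ?_).symm
    · intro x hx
      rw [hT, Finset.mem_filter] at hx
      rw [Finset.mem_filter]
      exact ⟨hx.1, hx.2.1⟩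
    · intro x hx hnx
      rw [Finset.mem_filter] at hx
      rw [hT, Finset.mem_filter] at hnx
      have hnd : ¬ (∀ a b : Fin n, a ≠ b → |x a| ≠ |x b|) := by
        intro hd
        exact hnx ⟨hx.1, hx.2, hd⟩
      push_neg at hnd
      obtain ⟨a, b, hab, habs⟩ := hnd
      exact multSOeven_eq_zero hn x a b hab habs
  -- Step 2: the bijection
  have step2 : ∑ q ∈ D ×ˢ (Finset.univ : Finset (Equiv.Perm (Fin n) × (Fin (n - 1) → Bool))),
      multSOeven n hn q.1 = ∑ x ∈ T, multSOeven n hn x := by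
    refine Finset.sum_nbij' Phi Psi ?_ ?_ ?_ ?_ ?_
    · -- Phi maps into T
      rintro ⟨y, σ, ε⟩ hq
      rw [Finset.mem_product, hD, Finset.mem_filter] at hq
      obtain ⟨⟨hyB, hyc, hyPn⟩, -⟩ := hq
      have habs : ∀ i, |Phi (y, σ, ε) i| = |y (σ⁻¹ i)| := fun i => abs_phi _ i
      have hsq : ∀ i, ((Phi (y, σ, ε) i : ℤ) : ℝ) ^ 2 = ((y (σ⁻¹ i) : ℤ) : ℝ) ^ 2 := by
        intro i
        have : (Phi (y, σ, ε) i) ^ 2 = (y (σ⁻¹ i)) ^ 2 := by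
          rw [← sq_abs (Phi (y, σ, ε) i), habs i, sq_abs]
        exact_mod_cast congrArg (fun t : ℤ => (t : ℝ)) this
      rw [hT, Finset.mem_filter]
      refine ⟨(memB _).mpr fun i => ?_, ?_, ?_⟩
      · rw [habs i]; exact (memB y).mp hyB (σ⁻¹ i)
      · show ∑ i, ((Phi (y, σ, ε) i : ℤ) : ℝ) ^ 2 ≤ R ^ 2
        calc ∑ i, ((Phi (y, σ, ε) i : ℤ) : ℝ) ^ 2
            = ∑ i, ((y (σ⁻¹ i) : ℤ) : ℝ) ^ 2 := Finset.sum_congr rfl fun i _ => hsq i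
          _ = ∑ i, ((y i : ℤ) : ℝ) ^ 2 := Equiv.sum_comp σ⁻¹ (fun i => ((y i : ℤ) : ℝ) ^ 2)
          _ ≤ R ^ 2 := hyPn
      · intro a b hab heq
        rw [habs a, habs b] at heq
        have hne : σ⁻¹ a ≠ σ⁻¹ b := fun h => hab (by simpa using congrArg σ h)
        have hanti := hyc.abs_strictAnti
        rcases lt_trichotomy (σ⁻¹ a) (σ⁻¹ b) with h | h | h
        · exact absurd heq (ne_of_gt (hanti _ _ h))
        · exact hne h
        · exact absurd heq (ne_of_lt (hanti _ _ h))
    · -- Psi maps into D × univ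
      intro x hx
      rw [hT, Finset.mem_filter] at hx
      obtain ⟨hxB, hxPn, hxD⟩ := hx
      have hanti := sortPerm_strictAnti x hxD
      rw [Finset.mem_product]
      refine ⟨?_, Finset.mem_univ _⟩
      rw [hD, Finset.mem_filter]
      refine ⟨(memB _).mpr fun i => ?_, ?_, ?_⟩
      · show |(if (i : ℕ) = n - 1 then x (sortPerm x i) else |x (sortPerm x i)|)| ≤ M
        split_ifs
        · exact (memB x).mp hxB (sortPerm x i)
        · rw [abs_abs]; exact (memB x).mp hxB (sortPerm x i)
      · -- chain condition
        intro i h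
        have hii : ((⟨i, by omega⟩ : Fin n) : ℕ) = i := rfl
        by_cases hcase : i + 1 = n - 1
        · rw [if_pos hcase]
          show |(if ((⟨i + 1, by omega⟩ : Fin n) : ℕ) = n - 1 then x (sortPerm x ⟨i + 1, by omega⟩) else |x (sortPerm x ⟨i + 1, by omega⟩)|)| < (if ((⟨i, by omega⟩ : Fin n) : ℕ) = n - 1 then x (sortPerm x ⟨i, by omega⟩) else |x (sortPerm x ⟨i, by omega⟩)|)
          rw [if_pos (by simpa using hcase), if_neg (by simp; omega)]
          simpa using hanti ⟨i, by omega⟩ ⟨i + 1, by omega⟩ (by simp [Fin.lt_def])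
        · rw [if_neg hcase]
          show (if ((⟨i + 1, by omega⟩ : Fin n) : ℕ) = n - 1 then x (sortPerm x ⟨i + 1, by omega⟩) else |x (sortPerm x ⟨i + 1, by omega⟩)|) < (if ((⟨i, by omega⟩ : Fin n) : ℕ) = n - 1 then x (sortPerm x ⟨i, by omega⟩) else |x (sortPerm x ⟨i, by omega⟩)|)
          rw [if_neg (by simpa using hcase), if_neg (by simp; omega)]
          exact hanti ⟨i, by omega⟩ ⟨i + 1, by omega⟩ (by simp [Fin.lt_def])
      · -- norm condition
        show ∑ i : Fin n, (((if (i : ℕ) = n - 1 then x (sortPerm x i) else |x (sortPerm x i)|) : ℤ) : ℝ) ^ 2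
            ≤ R ^ 2
        calc ∑ i : Fin n, (((if (i : ℕ) = n - 1 then x (sortPerm x i) else |x (sortPerm x i)|) : ℤ) : ℝ) ^ 2
            = ∑ i : Fin n, ((x (sortPerm x i) : ℤ) : ℝ) ^ 2 := by
              refine Finset.sum_congr rfl fun i _ => ?_
              split_ifs
              · rfl
              · push_cast [sq_abs]; ring
          _ = ∑ i : Fin n, ((x i : ℤ) : ℝ) ^ 2 := Equiv.sum_comp (sortPerm x) (fun i => ((x i : ℤ) : ℝ) ^ 2)
          _ ≤ R ^ 2 := hxPn
    · -- left inverse : Psi ∘ Phi = id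
      rintro ⟨y, σ, ε⟩ hq
      rw [Finset.mem_product, hD, Finset.mem_filter] at hq
      obtain ⟨⟨hyB, hyc, hyPn⟩, -⟩ := hq
      have hσ : sortPerm (Phi (y, σ, ε)) = σ := sortPerm_phi y σ ε hyc
      have hval : ∀ i : Fin n, Phi (y, σ, ε) (σ i) = sgnOf ε i * y i := by
        intro i; simp [Phi]
      refine Prod.ext ?_ (Prod.ext ?_ ?_)
      · funext i
        show (if (i : ℕ) = n - 1 then Phi (y, σ, ε) (sortPerm (Phi (y, σ, ε)) i)
            else |Phi (y, σ, ε) (sortPerm (Phi (y, σ, ε)) i)|) = y i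
        rw [hσ, hval]
        by_cases hi : (i : ℕ) = n - 1
        · rw [if_pos hi, sgnOf, dif_neg (by omega), one_mul]
        · have hi' : (i : ℕ) < n - 1 := by have := i.isLt; omega
          have hpos : 0 < y i := by
            have := hyc.pos i.1 (by omega)
            simpa using this
          rw [if_neg hi, abs_mul, abs_sgnOf, one_mul, abs_of_pos hpos]
      · show sortPerm (Phi (y, σ, ε)) = σ
        exact hσ
      · funext k
        show decide (Phi (y, σ, ε) (sortPerm (Phi (y, σ, ε)) ⟨k.1, by omega⟩) < 0) = ε k
        rw [hσ, hval]
        have hk : (k : ℕ) < n - 1 := k.isLt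
        have hpos : 0 < y ⟨k.1, by omega⟩ := by
          have := hyc.pos k.1 (by omega)
          simpa using this
        rw [sgnOf, dif_pos (by simpa using hk)]
        have : (⟨(⟨k.1, by omega⟩ : Fin n).1, by simpa using hk⟩ : Fin (n - 1)) = k := by
          ext; rfl
        rw [this]
        cases hε : ε k
        · rw [if_neg (by simp), one_mul, decide_eq_false_iff_not]
          exact not_lt.mpr (le_of_lt hpos)
        · rw [if_pos rfl, neg_one_mul, decide_eq_true_eq]
          simpa using hpos
    · -- right inverse : Phi ∘ Psi = id
      intro x hx
      rw [hT, Finset.mem_filter] at hx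
      obtain ⟨hxB, hxPn, hxD⟩ := hx
      funext i
      show sgnOf (Psi x).2.2 ((sortPerm x)⁻¹ i) * (Psi x).1 ((sortPerm x)⁻¹ i) = x i
      set k : Fin n := (sortPerm x)⁻¹ i with hk
      have hki : sortPerm x k = i := by rw [hk]; simp
      by_cases hcase : (k : ℕ) = n - 1
      · rw [sgnOf, dif_neg (by omega), one_mul]
        show (if (k : ℕ) = n - 1 then x (sortPerm x k) else |x (sortPerm x k)|) = x i
        rw [if_pos hcase, hki]
      · have hk' : (k : ℕ) < n - 1 := by have := k.isLt; omega
        rw [sgnOf, dif_pos hk']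
        show (if (Psi x).2.2 ⟨(k : ℕ), hk'⟩ then -1 else 1) *
            (if (k : ℕ) = n - 1 then x (sortPerm x k) else |x (sortPerm x k)|) = x i
        rw [if_neg hcase, hki]
        have hε : (Psi x).2.2 ⟨(k : ℕ), hk'⟩ = decide (x i < 0) := by
          show decide (x (sortPerm x ⟨(⟨(k : ℕ), hk'⟩ : Fin (n - 1)).1, by omega⟩) < 0) = _
          have : (⟨(⟨(k : ℕ), hk'⟩ : Fin (n - 1)).1, by omega⟩ : Fin n) = k := by ext; rfl
          rw [this, hki]
        rw [hε]
        rcases lt_trichotomy (x i) 0 with h | h | h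
        · rw [if_pos (by simpa using h), abs_of_neg h]; ring
        · simp [h]
        · rw [if_neg (by simpa using not_lt.mpr (le_of_lt h)), abs_of_pos h, one_mul]
    · -- values agree
      rintro ⟨y, σ, ε⟩ -
      symm
      refine multSOeven_invar hn σ⁻¹ (Phi (y, σ, ε)) y fun i => ?_
      have : (Phi (y, σ, ε) i) ^ 2 = (y (σ⁻¹ i)) ^ 2 := by
        rw [← sq_abs (Phi (y, σ, ε) i), abs_phi, sq_abs]
      exact_mod_cast congrArg (fun t : ℤ => (t : ℝ)) this
  -- Step 3: counting
  have step3 : ∑ q ∈ D ×ˢ (Finset.univ : Finset (Equiv.Perm (Fin n) × (Fin (n - 1) → Bool))),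
      multSOeven n hn q.1
      = (2 : ℝ) ^ (n - 1) * (n.factorial : ℝ) * ∑ x ∈ D, multSOeven n hn x := by
    rw [Finset.sum_product]
    have hcard : ((Fintype.card (Equiv.Perm (Fin n) × (Fin (n - 1) → Bool)) : ℕ) : ℝ)
        = (2 : ℝ) ^ (n - 1) * (n.factorial : ℝ) := by
      simp only [Fintype.card_prod, Fintype.card_perm, Fintype.card_fin, Fintype.card_fun,
        Fintype.card_bool]
      push_cast
      ring
    calc ∑ y ∈ D, ∑ _g ∈ (Finset.univ : Finset (Equiv.Perm (Fin n) × (Fin (n - 1) → Bool))),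
          multSOeven n hn y
        = ∑ y ∈ D, ((Fintype.card (Equiv.Perm (Fin n) × (Fin (n - 1) → Bool)) : ℕ) : ℝ)
            * multSOeven n hn y := by
          simp [Finset.sum_const, Finset.card_univ, nsmul_eq_mul]
      _ = (2 : ℝ) ^ (n - 1) * (n.factorial : ℝ) * ∑ x ∈ D, multSOeven n hn x := by
          rw [← Finset.mul_sum, hcard]
  rw [step1, ← step2, step3]

/-- Lattice sum expression for the eigenvalue counting function of the Laplacian on
`SO(2n)`: eigenvalues are indexed by `x_1 > x_2 > ⋯ > x_{n-1} > |x_n|` (coming from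
highest weights `b_1 ≥ ⋯ ≥ |b_n|` via `x_j = b_j + n - j`) with eigenvalue
`Σ x_j² − n(n−1)(2n−1)/6` and multiplicity `m(x)`; then
`N(λ) = (1/(2^{n-1} n!)) Σ_{x ∈ ℤⁿ, ‖x‖² ≤ R²} m(x)` with
`R² = λ + n(n−1)(2n−1)/6`. -/
theorem weyl_lattice_sum_SOeven (n : ℕ) (hn : 0 < n) (lam : ℝ) (hlam : 0 ≤ lam)
    (R : ℝ) (hR : R = Real.sqrt (lam + (n : ℝ) * ((n : ℝ) - 1) * (2 * (n : ℝ) - 1) / 6)) :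
    (∑ x ∈ (Fintype.piFinset fun _ : Fin n =>
          Finset.Icc (-(⌊R⌋₊ : ℤ)) (⌊R⌋₊ : ℤ)).filter
        (fun x => (∀ i : ℕ, ∀ h : i + 1 < n,
            (if i + 1 = n - 1 then |x ⟨i + 1, by omega⟩| < x ⟨i, by omega⟩
              else x ⟨i + 1, by omega⟩ < x ⟨i, by omega⟩)) ∧
          ∑ i, ((x i : ℤ) : ℝ) ^ 2 ≤ R ^ 2),
        multSOeven n hn x)
      = (1 / ((2 : ℝ) ^ (n - 1) * (n.factorial : ℝ))) *
        ∑ x ∈ (Fintype.piFinset fun _ : Fin n =>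
            Finset.Icc (-(⌊R⌋₊ : ℤ)) (⌊R⌋₊ : ℤ)).filter
          (fun x => ∑ i, ((x i : ℤ) : ℝ) ^ 2 ≤ R ^ 2),
          multSOeven n hn x := by
  classical
  have h := key_sum n hn ((⌊R⌋₊ : ℤ)) R
  rw [h]
  have hc : ((2 : ℝ) ^ (n - 1) * (n.factorial : ℝ)) ≠ 0 := by positivity
  rw [one_div, inv_mul_cancel_left₀ hc]
  rfl
end
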